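/- Let T be a regular s-interval exchange transformation. For any n ≥ 1, the n-th iterate T^n is a regular interval exchange transformation on n(s−1)+1 intervals. -/

import Mathlib

open Set

/-- An interval exchange transformation on `[l, r)` exchanging `s` half-open
intervals with boundaries `γ 0 = l < γ 1 < … < γ s = r`, translation values `α`,
and permutation `π` (ordering of the image intervals). -/
structure IET (s : ℕ) where
  l : ℝ
  r : ℝ
  hlr : l < r
  γ : Fin (s + 1) → ℝ
  γ_mono : StrictMono γ
  γ_first : γ 0 = l
  γ_last : γ (Fin.last s) = r
  α : Fin s → ℝ
  π : Equiv.Perm (Fin s)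
  T : ℝ → ℝ
  Tinv : ℝ → ℝ
  hT : ∀ i : Fin s, ∀ x ∈ Ico (γ i.castSucc) (γ i.succ), T x = x + α i
  hmaps : MapsTo T (Ico l r) (Ico l r)
  hinv_left : ∀ x ∈ Ico l r, Tinv (T x) = x
  hinv_right : ∀ x ∈ Ico l r, T (Tinv x) = x
  hinvmaps : MapsTo Tinv (Ico l r) (Ico l r)
  himg_mono : StrictMono fun k : Fin s => γ (Fin.castSucc (π.symm k)) + α (π.symm k)

namespace IET

variable {s : ℕ} (X : IET s)

/-- The `i`-th exchanged interval `I_i`. -/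
def I (i : Fin s) : Set ℝ := Ico (X.γ i.castSucc) (X.γ i.succ)

/-- The separation points `γ_1, …, γ_s` (left boundaries of the `I_i`). -/
def sep (i : Fin s) : ℝ := X.γ i.castSucc

/-- `δ i` : left boundary of the image interval `J_i = T(I_i)`. -/
def δ (i : Fin s) : ℝ := X.γ i.castSucc + X.α i

/-- `ℤ`-iterate of the transformation. -/
def iter (n : ℤ) : ℝ → ℝ := if 0 ≤ n then (X.T)^[n.toNat] else (X.Tinv)^[(-n).toNat]

/-- The two-sided orbit of a point. -/
def orbit (z : ℝ) : Set ℝ := {y | ∃ n : ℤ, X.iter n z = y}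

/-- Minimality: every orbit is dense in `[l, r)`. -/
def Minimal : Prop :=
  ∀ z ∈ Ico X.l X.r, ∀ y ∈ Ico X.l X.r, ∀ ε : ℝ, 0 < ε → ∃ w ∈ X.orbit z, |w - y| < ε

/-- Regularity (Keane's idoc condition): the orbits of the nonzero separation
points are infinite and pairwise disjoint. -/
def Regular : Prop :=
  ∀ i j : Fin s, (i : ℕ) ≠ 0 → (j : ℕ) ≠ 0 → ∀ m n : ℤ,
    X.iter m (X.sep i) = X.iter n (X.sep j) → i = j ∧ m = n

/-- `I_w` : the set of points whose natural coding begins with the word `w`. -/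
def Iw (X : IET s) : List (Fin s) → Set ℝ
  | [] => Ico X.l X.r
  | b :: w => X.I b ∩ X.T ⁻¹' (Iw X w)

/-- `J_w = T^{|w|}(I_w)`. -/
def Jw (w : List (Fin s)) : Set ℝ := (X.T)^[w.length] '' X.Iw w

/-- The factor set `F(T)` of the natural codings of `T`. -/
def Fact : Set (List (Fin s)) := {w | (X.Iw w).Nonempty}

/-- First (positive) return time of `z` to the set `J`. -/
noncomputable def retTime (J : Set ℝ) (z : ℝ) : ℕ := sInf {n : ℕ | 0 < n ∧ (X.T)^[n] z ∈ J}

/-- First return map of `T` on the set `J`. -/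
noncomputable def firstReturn (J : Set ℝ) (z : ℝ) : ℝ := (X.T)^[X.retTime J z] z

/-- `ρ⁺_{[u,v),T}(z) = min {n > 0 | T^n z ∈ (u,v)}`. -/
noncomputable def rhoP (u v z : ℝ) : ℕ := sInf {n : ℕ | 0 < n ∧ X.iter n z ∈ Ioo u v}

/-- `ρ⁻_{[u,v),T}(z) = min {n ≥ 0 | T^{-n} z ∈ (u,v)}`. -/
noncomputable def rhoM (u v z : ℝ) : ℕ := sInf {n : ℕ | X.iter (-(n : ℤ)) z ∈ Ioo u v}

/-- The set of neighbors of `z` with respect to `[u,v)` and `T`. -/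
def nbrs (u v z : ℝ) : Set ℝ :=
  {y | ∃ k : ℤ, -(X.rhoM u v z : ℤ) ≤ k ∧ k < (X.rhoP u v z : ℤ) ∧ X.iter k z = y}

/-- The set of division points of `[u,v)` with respect to `T`. -/
def Div (u v : ℝ) : Set ℝ := ⋃ i : Fin s, X.nbrs u v (X.sep i)

/-- A semi-interval `[u,v) ⊆ [l,r)` is admissible for `T` if both of its
endpoints belong to `Div([u,v),T) ∪ {r}`. -/
def Admissible (u v : ℝ) : Prop :=
  X.l ≤ u ∧ u < v ∧ v ≤ X.r ∧ u ∈ X.Div u v ∧ (v ∈ X.Div u v ∨ v = X.r)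

/-- `Y` is (a presentation of) the transformation induced by `X` on `[u,v)`:
its domain is `[u,v)`, it acts as the first return map of `X`, and its
separation points are the division points of `[u,v)` inside `[u,v)`. -/
def InducedOn (Y : IET s) (u v : ℝ) : Prop :=
  Y.l = u ∧ Y.r = v ∧ (∀ z ∈ Ico u v, Y.T z = X.firstReturn (Ico u v) z) ∧
    {y | ∃ i : Fin s, Y.sep i = y} = X.Div u v ∩ Ico u v

end IET
section Aux

open Set Function

/-- generic: find the piece containing x -/
lemma exists_piece' {m : ℕ} (g : Fin (m+1) → ℝ) (x : ℝ) (hx : g 0 ≤ x)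
    (hx' : x < g (Fin.last m)) :
    ∃ a : Fin m, g (Fin.castSucc a) ≤ x ∧ x < g (Fin.succ a) := by
  classical
  have h0 : (0 : Fin (m+1)) ∈ Finset.univ.filter (fun c => g c ≤ x) := by simp [hx]
  have hne : (Finset.univ.filter (fun c => g c ≤ x)).Nonempty := ⟨0, h0⟩
  have hgc : g ((Finset.univ.filter (fun c => g c ≤ x)).max' hne) ≤ x := by
    simpa using (Finset.univ.filter (fun c => g c ≤ x)).max'_mem hne
  have hclt : (((Finset.univ.filter (fun c => g c ≤ x)).max' hne : Fin (m+1)) : ℕ) < m := by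
    rcases lt_or_eq_of_le (Nat.lt_succ_iff.mp ((Finset.univ.filter (fun c => g c ≤ x)).max' hne).isLt) with h | h
    · exact h
    · exfalso
      have hcl : (Finset.univ.filter (fun c => g c ≤ x)).max' hne = Fin.last m := by
        ext; simpa using h
      rw [hcl] at hgc; linarith
  refine ⟨⟨_, hclt⟩, ?_, ?_⟩
  · have : Fin.castSucc (⟨_, hclt⟩ : Fin m) = (Finset.univ.filter (fun c => g c ≤ x)).max' hne := by
      ext; simp
    rw [this]; exact hgc
  · by_contra h
    push_neg at h
    have hmem : (⟨(((Finset.univ.filter (fun c => g c ≤ x)).max' hne : Fin (m+1)) : ℕ) + 1, by omega⟩ : Fin (m+1)) ∈ Finset.univ.filter (fun c => g c ≤ x) := by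
      have heq : Fin.succ (⟨_, hclt⟩ : Fin m) = (⟨(((Finset.univ.filter (fun c => g c ≤ x)).max' hne : Fin (m+1)) : ℕ) + 1, by omega⟩ : Fin (m+1)) := by
        ext; simp
      rw [heq] at h
      simp [h]
    have h2 := (Finset.univ.filter (fun c => g c ≤ x)).le_max' _ hmem
    rw [Fin.le_def] at h2
    simp at h2

namespace IET

variable {s : ℕ} (X : IET s)

lemma sep_mem (i : Fin s) : X.sep i ∈ Ico X.l X.r := by
  constructor
  · rw [← X.γ_first]; exact X.γ_mono.monotone (Fin.zero_le _)
  · rw [← X.γ_last]; exact X.γ_mono (Fin.castSucc_lt_last i)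

lemma sep_pos {i : Fin s} (hi : (i : ℕ) ≠ 0) : X.l < X.sep i := by
  rw [← X.γ_first]
  exact X.γ_mono (by simp [Fin.lt_def, Nat.pos_of_ne_zero hi])

lemma mapsTo_iterT (m : ℕ) : MapsTo (X.T^[m]) (Ico X.l X.r) (Ico X.l X.r) :=
  X.hmaps.iterate m

lemma mapsTo_iterTinv (m : ℕ) : MapsTo (X.Tinv^[m]) (Ico X.l X.r) (Ico X.l X.r) :=
  X.hinvmaps.iterate m

lemma inv_left_iter (m : ℕ) : ∀ x ∈ Ico X.l X.r, X.Tinv^[m] (X.T^[m] x) = x := by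
  induction m with
  | zero => simp
  | succ m ih =>
    intro x hx
    rw [Function.iterate_succ_apply' X.T, Function.iterate_succ_apply X.Tinv,
      X.hinv_left _ (X.mapsTo_iterT m hx)]
    exact ih x hx

lemma inv_right_iter (m : ℕ) : ∀ x ∈ Ico X.l X.r, X.T^[m] (X.Tinv^[m] x) = x := by
  induction m with
  | zero => simp
  | succ m ih =>
    intro x hx
    rw [Function.iterate_succ_apply X.Tinv, Function.iterate_succ_apply' X.T,
      ih _ (X.hinvmaps hx)]
    exact X.hinv_right x hx

/-- the restriction of `T` to `[l,r)` as a permutation -/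
def perm : Equiv.Perm (Ico X.l X.r) where
  toFun z := ⟨X.T z, X.hmaps z.2⟩
  invFun z := ⟨X.Tinv z, X.hinvmaps z.2⟩
  left_inv z := Subtype.ext (X.hinv_left z z.2)
  right_inv z := Subtype.ext (X.hinv_right z z.2)

lemma perm_pow_coe (m : ℕ) : ∀ z : Ico X.l X.r, (((X.perm ^ m) z : Ico X.l X.r) : ℝ) = X.T^[m] (z : ℝ) := by
  induction m with
  | zero => intro z; simp
  | succ m ih =>
    intro z
    rw [pow_succ, Equiv.Perm.mul_apply, ih, Function.iterate_succ_apply]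
    rfl

lemma perm_inv_pow_coe (m : ℕ) : ∀ z : Ico X.l X.r, (((X.perm⁻¹ ^ m) z : Ico X.l X.r) : ℝ) = X.Tinv^[m] (z : ℝ) := by
  induction m with
  | zero => intro z; simp
  | succ m ih =>
    intro z
    rw [pow_succ, Equiv.Perm.mul_apply, ih, Function.iterate_succ_apply]
    rfl

lemma iter_coe_eq (a : ℤ) (z : Ico X.l X.r) :
    X.iter a (z : ℝ) = (((X.perm ^ a) z : Ico X.l X.r) : ℝ) := by
  rcases a with m | m
  · rw [Int.ofNat_eq_natCast, zpow_natCast]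
    unfold iter
    rw [if_pos (by positivity)]
    simp [perm_pow_coe]
  · rw [zpow_negSucc, ← inv_pow]
    unfold iter
    rw [if_neg (not_le.mpr (Int.negSucc_lt_zero m))]
    rw [X.perm_inv_pow_coe (m+1) z]
    congr 1

lemma iter_mem (a : ℤ) {z : ℝ} (hz : z ∈ Ico X.l X.r) : X.iter a z ∈ Ico X.l X.r := by
  rw [X.iter_coe_eq a ⟨z, hz⟩]
  exact Subtype.coe_prop _

lemma iter_add (a b : ℤ) {z : ℝ} (hz : z ∈ Ico X.l X.r) :
    X.iter a (X.iter b z) = X.iter (a + b) z := by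
  calc X.iter a (X.iter b z) = X.iter a (((X.perm ^ b) ⟨z, hz⟩ : Ico X.l X.r) : ℝ) := by
        rw [X.iter_coe_eq b ⟨z, hz⟩]
    _ = (((X.perm ^ a) ((X.perm ^ b) ⟨z, hz⟩) : Ico X.l X.r) : ℝ) := X.iter_coe_eq a _
    _ = (((X.perm ^ (a + b)) ⟨z, hz⟩ : Ico X.l X.r) : ℝ) := by
        rw [zpow_add, Equiv.Perm.mul_apply]
    _ = X.iter (a + b) z := (X.iter_coe_eq (a + b) ⟨z, hz⟩).symm

lemma iter_natCast (k : ℕ) (z : ℝ) : X.iter (k : ℤ) z = X.T^[k] z := by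
  unfold iter
  rw [if_pos (by positivity)]
  simp

lemma iter_neg_natCast (k : ℕ) (z : ℝ) : X.iter (-(k : ℤ)) z = X.Tinv^[k] z := by
  unfold iter
  rcases Nat.eq_zero_or_pos k with h | h
  · subst h; simp
  · rw [if_neg (by omega)]
    simp

end IET
end Aux
section Aux2
open Set Function

lemma aux_lt (n s e : ℕ) (h1 : e < n*(s-1)+2) (h2 : e ≠ 0) (h3 : e ≠ n*(s-1)+1) :
    (e-1) % (s-1) + 1 < s := by
  have h4 : 1 ≤ n * (s-1) := by omega
  have hs : 1 ≤ s - 1 := by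
    rcases Nat.eq_zero_or_pos (s-1) with h | h
    · rw [h, Nat.mul_zero] at h4; omega
    · exact h
  have := Nat.mod_lt (e-1) (y := s-1) hs
  omega

namespace IET
variable {s : ℕ} (X : IET s)

/-- if a backward iterate of a nonzero separation point were `l`, regularity fails -/
lemma iter_neg_ne_l (hreg : X.Regular) {i : Fin s} (hi : (i : ℕ) ≠ 0) (k : ℕ) :
    X.iter (-(k : ℤ)) (X.sep i) ≠ X.l := by
  intro hl
  have hlmem : X.l ∈ Ico X.l X.r := ⟨le_refl _, X.hlr⟩
  have hTinv : X.Tinv X.l ∈ Ico X.l X.r := X.hinvmaps hlmem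
  obtain ⟨a, ha1, ha2⟩ := exists_piece' X.γ (X.Tinv X.l)
    (by rw [X.γ_first]; exact hTinv.1) (by rw [X.γ_last]; exact hTinv.2)
  have hTa : X.T (X.Tinv X.l) = X.Tinv X.l + X.α a := X.hT a _ ⟨ha1, ha2⟩
  have hTl : X.Tinv X.l + X.α a = X.l := by rw [← hTa]; exact X.hinv_right _ hlmem
  have hsa : X.sep a ∈ Ico X.l X.r := X.sep_mem a
  have hTsep : X.T (X.sep a) = X.sep a + X.α a :=
    X.hT a _ ⟨le_refl _, X.γ_mono (Fin.castSucc_lt_succ : a.castSucc < a.succ)⟩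
  have hδ : X.l ≤ X.sep a + X.α a := by rw [← hTsep]; exact (X.hmaps hsa).1
  have hδ' : X.sep a + X.α a ≤ X.l := by
    have : X.sep a ≤ X.Tinv X.l := ha1
    linarith
  have hδeq : X.T (X.sep a) = X.l := by rw [hTsep]; linarith
  by_cases ha : (a : ℕ) = 0
  · have hsep0 : X.sep a = X.l := by
      have h0 : Fin.castSucc a = 0 := by ext; simpa using ha
      rw [sep, h0, X.γ_first]
    have hTll : X.T X.l = X.l := by rw [← hsep0, hδeq, hsep0]
    have hiterl : ∀ m : ℕ, X.T^[m] X.l = X.l := by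
      intro m
      induction m with
      | zero => simp
      | succ m ih => rw [Function.iterate_succ_apply', ih, hTll]
    have hsi : X.sep i = X.l := by
      have h1 : X.iter (k : ℤ) (X.iter (-(k : ℤ)) (X.sep i)) = X.iter 0 (X.sep i) := by
        rw [X.iter_add _ _ (X.sep_mem i)]; norm_num
      have h0 : X.iter 0 (X.sep i) = X.sep i := by unfold IET.iter; simp
      rw [hl, X.iter_natCast, hiterl, h0] at h1
      exact h1.symm
    have := X.sep_pos hi
    linarith
  · have h1 : X.iter 1 (X.sep a) = X.l := by
      have : X.iter 1 (X.sep a) = X.T^[1] (X.sep a) := by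
        rw [show (1 : ℤ) = ((1 : ℕ) : ℤ) by norm_num, X.iter_natCast]
      rw [this]; simpa using hδeq
    have := hreg i a hi ha (-(k : ℤ)) 1 (by rw [hl, h1])
    omega

variable (n : ℕ)

/-- boundary points of the power IET, unsorted: index 0 ↦ l, index n(s-1)+1 ↦ r,
index k(s-1)+(b-1)+1 ↦ T^{-k}(sep b) -/
noncomputable def powF : Fin (n*(s-1)+1+1) → ℝ := fun e =>
  if h2 : (e : ℕ) = 0 then X.l
  else if h3 : (e : ℕ) = n*(s-1)+1 then X.r
  else X.iter (-((((e : ℕ)-1)/(s-1) : ℕ) : ℤ))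
    (X.sep ⟨((e : ℕ)-1) % (s-1) + 1, aux_lt n s e e.isLt h2 h3⟩)

lemma powF_ge (e : Fin (n*(s-1)+1+1)) : X.l ≤ powF X n e := by
  unfold powF
  split_ifs with h2 h3
  · exact le_refl _
  · exact le_of_lt X.hlr
  · exact (X.iter_mem _ (X.sep_mem _)).1

lemma powF_le (e : Fin (n*(s-1)+1+1)) : powF X n e ≤ X.r := by
  unfold powF
  split_ifs with h2 h3
  · exact le_of_lt X.hlr
  · exact le_refl _
  · exact le_of_lt (X.iter_mem _ (X.sep_mem _)).2

lemma powF_zero : powF X n 0 = X.l := by unfold powF; simp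

lemma powF_last : powF X n (Fin.last _) = X.r := by
  unfold powF
  rw [dif_neg (by simp [Fin.last]), dif_pos (by simp [Fin.last])]

lemma powF_middle (e : Fin (n*(s-1)+1+1)) (h2 : (e : ℕ) ≠ 0) (h3 : (e : ℕ) ≠ n*(s-1)+1) :
    powF X n e = X.iter (-((((e : ℕ)-1)/(s-1) : ℕ) : ℤ))
      (X.sep ⟨((e : ℕ)-1) % (s-1) + 1, aux_lt n s e e.isLt h2 h3⟩) := by
  unfold powF
  rw [dif_neg h2, dif_neg h3]

lemma powF_middle_div_lt (e : Fin (n*(s-1)+1+1)) (h2 : (e : ℕ) ≠ 0) (h3 : (e : ℕ) ≠ n*(s-1)+1) :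
    ((e : ℕ)-1)/(s-1) < n := by
  have h4 : 1 ≤ n * (s-1) := by have := e.isLt; omega
  have hs : 1 ≤ s - 1 := by
    rcases Nat.eq_zero_or_pos (s-1) with h | h
    · rw [h, Nat.mul_zero] at h4; omega
    · exact h
  rw [Nat.div_lt_iff_lt_mul hs]
  have := e.isLt
  calc (e : ℕ) - 1 < n * (s-1) := by omega
  _ ≤ n * (s-1) := le_refl _
  -- goal: e-1 < n * (s-1)? careful order of mul

lemma mem_range_powF {k : ℕ} (hk : k < n) {i : Fin s} (hi : (i : ℕ) ≠ 0) :
    X.iter (-(k : ℤ)) (X.sep i) ∈ Set.range (powF X n) := by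
  have hi1 : 1 ≤ (i : ℕ) := Nat.pos_of_ne_zero hi
  have his : (i : ℕ) ≤ s - 1 := by have := i.isLt; omega
  have hbound : k*(s-1) + (i : ℕ) ≤ n*(s-1) := by
    calc k*(s-1) + (i : ℕ) ≤ k*(s-1) + (s-1) := by omega
    _ = (k+1)*(s-1) := by ring
    _ ≤ n*(s-1) := Nat.mul_le_mul_right _ hk
  refine ⟨⟨k*(s-1) + (i : ℕ), by omega⟩, ?_⟩
  have h2 : (k*(s-1) + (i : ℕ)) ≠ 0 := by omega
  have h3 : (k*(s-1) + (i : ℕ)) ≠ n*(s-1)+1 := by omega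
  rw [powF_middle X n _ h2 h3]
  have hs1 : 0 < s - 1 := by omega
  have he1 : k*(s-1) + (i : ℕ) - 1 = (i : ℕ) - 1 + k * (s-1) := by omega
  have hdiv : (k*(s-1) + (i : ℕ) - 1) / (s-1) = k := by
    rw [he1, Nat.add_mul_div_right _ _ hs1, Nat.div_eq_of_lt (by omega)]
    omega
  have hmod : (k*(s-1) + (i : ℕ) - 1) % (s-1) = (i : ℕ) - 1 := by
    rw [he1, Nat.add_mul_mod_self_right, Nat.mod_eq_of_lt (by omega)]
  congr 1
  · rw [hdiv]
  · congr 1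
    ext
    simp only [hmod]
    omega

end IET
end Aux2
section Aux3
open Set Function

namespace IET
variable {s : ℕ} (X : IET s) (n : ℕ)

lemma powF_inj (hreg : X.Regular) : Function.Injective (powF X n) := by
  intro e e' h
  unfold powF at h
  split_ifs at h with h2 h2' h3 h2' h3' h3 h3'
  · ext; omega
  · exact absurd h (ne_of_lt X.hlr)
  · exact absurd h.symm (X.iter_neg_ne_l hreg (Nat.succ_ne_zero _) _)
  · exact absurd h.symm (ne_of_lt X.hlr)
  · ext; omega
  · exact absurd h.symm (ne_of_lt (X.iter_mem _ (X.sep_mem _)).2)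
  · exact absurd h (X.iter_neg_ne_l hreg (Nat.succ_ne_zero _) _)
  · exact absurd h (ne_of_lt (X.iter_mem _ (X.sep_mem _)).2)
  · obtain ⟨hb, hm⟩ := hreg _ _ (Nat.succ_ne_zero _) (Nat.succ_ne_zero _) _ _ h
    have hd : ((e : ℕ)-1)/(s-1) = ((e' : ℕ)-1)/(s-1) := by omega
    simp only [Fin.mk.injEq] at hb
    have hmod : ((e : ℕ)-1) % (s-1) = ((e' : ℕ)-1) % (s-1) := by omega
    have q1 := Nat.div_add_mod ((e : ℕ)-1) (s-1)
    have q2 := Nat.div_add_mod ((e' : ℕ)-1) (s-1)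
    rw [hd, hmod] at q1
    ext
    omega

/-- the sorted boundary points of the power IET -/
noncomputable def powγ : Fin (n*(s-1)+1+1) → ℝ := powF X n ∘ Tuple.sort (powF X n)

lemma powγ_mono (hreg : X.Regular) : StrictMono (powγ X n) :=
  (Tuple.monotone_sort (powF X n)).strictMono_of_injective
    ((powF_inj X n hreg).comp (Equiv.injective _))

lemma powγ_mem_range (e : Fin (n*(s-1)+1+1)) : powγ X n e ∈ Set.range (powF X n) :=
  ⟨_, rfl⟩

lemma range_powγ (y : ℝ) (hy : y ∈ Set.range (powF X n)) : ∃ m, powγ X n m = y := by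
  obtain ⟨e, he⟩ := hy
  exact ⟨(Tuple.sort (powF X n)).symm e, by simp [powγ, Function.comp_apply, he]⟩

lemma powγ_ge (e : Fin (n*(s-1)+1+1)) : X.l ≤ powγ X n e := powF_ge X n _
lemma powγ_le (e : Fin (n*(s-1)+1+1)) : powγ X n e ≤ X.r := powF_le X n _

lemma powγ_first (hreg : X.Regular) : powγ X n 0 = X.l := by
  have h1 : X.l ≤ powγ X n 0 := powγ_ge X n 0
  obtain ⟨m, hm⟩ : ∃ m, powγ X n m = X.l := range_powγ X n _ ⟨0, powF_zero X n⟩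
  have h2 : powγ X n 0 ≤ powγ X n m := (powγ_mono X n hreg).monotone (Fin.zero_le m)
  rw [hm] at h2
  linarith

lemma powγ_last (hreg : X.Regular) : powγ X n (Fin.last _) = X.r := by
  have h1 : powγ X n (Fin.last _) ≤ X.r := powγ_le X n _
  obtain ⟨m, hm⟩ : ∃ m, powγ X n m = X.r := range_powγ X n _ ⟨Fin.last _, powF_last X n⟩
  have h2 : powγ X n m ≤ powγ X n (Fin.last _) := (powγ_mono X n hreg).monotone (Fin.le_last m)
  rw [hm] at h2
  linarith

lemma powγ_between (hreg : X.Regular) {j : Fin (n*(s-1)+1)} {w : ℝ}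
    (hw : w ∈ Set.range (powF X n)) (h1 : powγ X n j.castSucc < w)
    (h2 : w < powγ X n j.succ) : False := by
  obtain ⟨m, hm⟩ := range_powγ X n w hw
  rw [← hm] at h1 h2
  have l1 := ((powγ_mono X n hreg).lt_iff_lt).mp h1
  have l2 := ((powγ_mono X n hreg).lt_iff_lt).mp h2
  rw [Fin.lt_def] at l1 l2
  simp at l1 l2
  omega

lemma powγ_castSucc_mem (hreg : X.Regular) (j : Fin (n*(s-1)+1)) :
    powγ X n j.castSucc ∈ Ico X.l X.r := by
  refine ⟨powγ_ge X n _, ?_⟩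
  rw [← powγ_last X n hreg]
  exact powγ_mono X n hreg (Fin.castSucc_lt_last j)

end IET
end Aux3
section Aux4
open Set Function

namespace IET
variable {s : ℕ} (X : IET s) (n : ℕ)

lemma trans_key (hreg : X.Regular) (k : ℕ) (hk : k ≤ n) :
    ∀ j : Fin (n*(s-1)+1), ∀ x, powγ X n j.castSucc ≤ x → x < powγ X n j.succ →
    X.T^[k] x = X.T^[k] (powγ X n j.castSucc) + (x - powγ X n j.castSucc) := by
  induction k with
  | zero => intro j x h1 h2; simp
  | succ k ih =>
    intro j x hx1 hx2
    have hk' : k ≤ n := by omega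
    have hkn : k < n := by omega
    have ihx := ih hk' j x hx1 hx2
    set c := powγ X n j.castSucc with hc
    have hcIco : c ∈ Ico X.l X.r := powγ_castSucc_mem X n hreg j
    have hsucc_le : powγ X n j.succ ≤ X.r := powγ_le X n _
    have hxIco : x ∈ Ico X.l X.r := ⟨le_trans hcIco.1 hx1, lt_of_lt_of_le hx2 hsucc_le⟩
    have huIco : X.T^[k] c ∈ Ico X.l X.r := X.mapsTo_iterT k hcIco
    have hvIco : X.T^[k] x ∈ Ico X.l X.r := X.mapsTo_iterT k hxIco
    obtain ⟨a, ha1, ha2⟩ := exists_piece' X.γ (X.T^[k] c)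
      (by rw [X.γ_first]; exact huIco.1) (by rw [X.γ_last]; exact huIco.2)
    have huv : X.T^[k] c ≤ X.T^[k] x := by rw [ihx]; linarith
    have hva : X.T^[k] x < X.γ a.succ := by
      by_contra hcon
      push_neg at hcon
      have hlast : X.γ a.succ < X.γ (Fin.last s) := by
        rw [X.γ_last]; exact lt_of_le_of_lt hcon hvIco.2
      have hsuc_lt : ((a : ℕ) + 1) < s := by
        have h5 := X.γ_mono.lt_iff_lt.mp hlast
        rw [Fin.lt_def] at h5
        simpa using h5
      set i : Fin s := ⟨(a : ℕ)+1, hsuc_lt⟩ with hi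
      have hsepi : X.sep i = X.γ a.succ := by
        have hcs : Fin.castSucc i = a.succ := by ext; simp [hi]
        rw [sep, hcs]
      set w := c + (X.sep i - X.T^[k] c) with hw
      have hw1 : c < w := by rw [hw, hsepi]; linarith
      have hw2 : w ≤ x := by
        rw [hw, hsepi]
        linarith [ihx]
      have hwpiece : w < powγ X n j.succ := lt_of_le_of_lt hw2 hx2
      have ihw := ih hk' j w (le_of_lt hw1) hwpiece
      have hTw : X.T^[k] w = X.sep i := by rw [ihw, ← hc, hw]; ring
      have hwIco : w ∈ Ico X.l X.r :=
        ⟨le_trans hcIco.1 (le_of_lt hw1), lt_of_lt_of_le (lt_of_le_of_lt hw2 hx2) hsucc_le⟩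
      have hiterw : X.iter (-(k : ℤ)) (X.sep i) = w := by
        rw [X.iter_neg_natCast, ← hTw, X.inv_left_iter k w hwIco]
      have hrange : w ∈ Set.range (powF X n) := by
        rw [← hiterw]
        exact mem_range_powF X n hkn (by simp [hi])
      exact powγ_between X n hreg hrange (by rw [← hc]; exact hw1) hwpiece
    have e1 : X.T^[k+1] c = X.T^[k] c + X.α a := by
      rw [Function.iterate_succ_apply']
      exact X.hT a _ ⟨ha1, ha2⟩
    have e2 : X.T^[k+1] x = X.T^[k] x + X.α a := by
      rw [Function.iterate_succ_apply']
      exact X.hT a _ ⟨le_trans ha1 huv, hva⟩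
    rw [e1, e2, ihx]
    ring

end IET
end Aux4
section Aux5
open Set Function

namespace IET
variable {s : ℕ} (X : IET s) (n : ℕ)

lemma pow_iter (hn : 1 ≤ n) {N : ℕ} (Y : IET N) (hYT : Y.T = X.T^[n])
    (hYTinv : Y.Tinv = X.Tinv^[n]) (m : ℤ) (z : ℝ) :
    Y.iter m z = X.iter ((n : ℤ) * m) z := by
  unfold iter
  rcases le_or_gt 0 m with h | h
  · lift m to ℕ using h with t
    rw [if_pos (by positivity), if_pos (by positivity), hYT, ← Function.iterate_mul]
    have : ((n : ℤ) * (t : ℤ)).toNat = n * ((t : ℤ)).toNat := by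
      rw [← Nat.cast_mul, Int.toNat_natCast, Int.toNat_natCast]
    rw [this]
  · obtain ⟨t, rfl⟩ : ∃ t : ℕ, m = -(t : ℤ) := ⟨(-m).toNat, by omega⟩
    have hneg : (n : ℤ) * (-(t : ℤ)) < 0 := by
      apply mul_neg_of_pos_of_neg
      · exact_mod_cast hn
      · exact h
    rw [if_neg (by omega), if_neg (by omega), hYTinv, ← Function.iterate_mul]
    congr 1
    rw [neg_neg, Int.toNat_natCast,
      show -((n : ℤ) * -(t : ℤ)) = ((n * t : ℕ) : ℤ) by push_cast; ring,
      Int.toNat_natCast]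

lemma pow_regular_aux (hreg : X.Regular) (hn : 1 ≤ n) (Y : IET (n*(s-1)+1))
    (hYγ : Y.γ = powγ X n) (hYT : Y.T = X.T^[n]) (hYTinv : Y.Tinv = X.Tinv^[n]) :
    Y.Regular := by
  have hsepY : ∀ i : Fin (n*(s-1)+1), Y.sep i = powγ X n (Fin.castSucc i) := by
    intro i; rw [sep, hYγ]
  have decode : ∀ i : Fin (n*(s-1)+1), (i : ℕ) ≠ 0 → ∃ (k : ℕ) (b : Fin s),
      k < n ∧ (b : ℕ) ≠ 0 ∧ Y.sep i = X.iter (-(k : ℤ)) (X.sep b) := by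
    intro i hi
    set e := Tuple.sort (powF X n) (Fin.castSucc i) with he
    have hse : Y.sep i = powF X n e := by rw [hsepY]; rfl
    have he0 : (e : ℕ) ≠ 0 := by
      intro h0
      have he' : e = 0 := by ext; exact h0
      rw [he', powF_zero] at hse
      have hlt : powγ X n 0 < powγ X n (Fin.castSucc i) :=
        powγ_mono X n hreg (by rw [Fin.lt_def]; simpa using Nat.pos_of_ne_zero hi)
      rw [powγ_first X n hreg] at hlt
      rw [hsepY] at hse
      linarith
    have heN : (e : ℕ) ≠ n*(s-1)+1 := by
      intro hNe
      have he' : e = Fin.last _ := by ext; simpa using hNe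
      rw [he', powF_last] at hse
      have hlt : powγ X n (Fin.castSucc i) < powγ X n (Fin.last _) :=
        powγ_mono X n hreg (Fin.castSucc_lt_last i)
      rw [powγ_last X n hreg] at hlt
      rw [hsepY] at hse
      linarith
    exact ⟨_, _, powF_middle_div_lt n e he0 heN, Nat.succ_ne_zero _,
      by rw [hse, powF_middle X n e he0 heN]⟩
  intro i j hi hj m m' h
  obtain ⟨k1, b1, hk1, hb1, he1⟩ := decode i hi
  obtain ⟨k2, b2, hk2, hb2, he2⟩ := decode j hj
  rw [pow_iter X n hn Y hYT hYTinv, pow_iter X n hn Y hYT hYTinv, he1, he2,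
    X.iter_add _ _ (X.sep_mem b1), X.iter_add _ _ (X.sep_mem b2)] at h
  obtain ⟨hbb, hmm⟩ := hreg b1 b2 hb1 hb2 _ _ h
  have hdvd : (n : ℤ) ∣ ((k1 : ℤ) - k2) := ⟨m - m', by linarith⟩
  have habs : |(k1 : ℤ) - k2| < n := by
    rw [abs_lt]
    constructor <;> [push_cast; push_cast] <;> omega
  have h0 := Int.eq_zero_of_abs_lt_dvd hdvd habs
  have hkk : k1 = k2 := by omega
  have hmmm : m = m' := by
    have hne : (n : ℤ) ≠ 0 := by positivity
    apply mul_left_cancel₀ hne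
    omega
  refine ⟨?_, hmmm⟩
  have hsepeq : Y.sep i = Y.sep j := by rw [he1, he2, hkk, hbb]
  rw [hsepY, hsepY] at hsepeq
  have := (powγ_mono X n hreg).injective hsepeq
  exact Fin.castSucc_injective _ this

end IET
end Aux5
/-- the `n`-th iterate of a regular `s`-interval exchange
transformation is a regular interval exchange transformation on
`n(s-1)+1` intervals. -/
theorem iet_pow_regular {s : ℕ} (X : IET s) (hreg : X.Regular) (n : ℕ) (hn : 1 ≤ n) :
    ∃ Y : IET (n * (s - 1) + 1), Y.Regular ∧ Y.l = X.l ∧ Y.r = X.r ∧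
      (∀ z ∈ Set.Ico X.l X.r, Y.T z = (X.T)^[n] z) ∧
      (∀ z ∈ Set.Ico X.l X.r, Y.Tinv z = (X.Tinv)^[n] z) := by
  classical
  have hγmono := IET.powγ_mono X n hreg
  have hT' : ∀ i : Fin (n*(s-1)+1),
      ∀ x ∈ Set.Ico (IET.powγ X n (Fin.castSucc i)) (IET.powγ X n (Fin.succ i)),
      X.T^[n] x = x + (X.T^[n] (IET.powγ X n (Fin.castSucc i)) - IET.powγ X n (Fin.castSucc i)) := by
    intro i x hx
    have := IET.trans_key X n hreg n (le_refl n) i x hx.1 hx.2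
    linarith
  have hd_inj : Function.Injective
      (fun i : Fin (n*(s-1)+1) => X.T^[n] (IET.powγ X n (Fin.castSucc i))) := by
    intro i i' h
    simp only [] at h
    have h1 : IET.powγ X n (Fin.castSucc i) = IET.powγ X n (Fin.castSucc i') := by
      rw [← X.inv_left_iter n _ (IET.powγ_castSucc_mem X n hreg i), h,
        X.inv_left_iter n _ (IET.powγ_castSucc_mem X n hreg i')]
    exact Fin.castSucc_injective _ (hγmono.injective h1)
  refine ⟨({ l := X.l
             r := X.r
             hlr := X.hlr
             γ := IET.powγ X n
             γ_mono := hγmono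
             γ_first := IET.powγ_first X n hreg
             γ_last := IET.powγ_last X n hreg
             α := fun i => X.T^[n] (IET.powγ X n (Fin.castSucc i)) - IET.powγ X n (Fin.castSucc i)
             π := (Tuple.sort (fun i : Fin (n*(s-1)+1) =>
               X.T^[n] (IET.powγ X n (Fin.castSucc i)))).symm
             T := X.T^[n]
             Tinv := X.Tinv^[n]
             hT := hT'
             hmaps := X.mapsTo_iterT n
             hinv_left := X.inv_left_iter n
             hinv_right := X.inv_right_iter n
             hinvmaps := X.mapsTo_iterTinv n
             himg_mono := ?_ } : IET (n * (s - 1) + 1)),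
    ?_, rfl, rfl, fun z _ => rfl, fun z _ => rfl⟩
  · set d : Fin (n*(s-1)+1) → ℝ :=
      fun i => X.T^[n] (IET.powγ X n (Fin.castSucc i)) with hd
    have hrw : (fun k : Fin (n*(s-1)+1) =>
        IET.powγ X n (Fin.castSucc (((Tuple.sort d).symm).symm k)) +
          (d (((Tuple.sort d).symm).symm k)
            - IET.powγ X n (Fin.castSucc (((Tuple.sort d).symm).symm k))))
        = d ∘ Tuple.sort d := by
      funext k
      simp only [Equiv.symm_symm, Function.comp_apply]
      ring
    rw [hrw]
    exact (Tuple.monotone_sort d).strictMono_of_injective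
      (hd_inj.comp (Equiv.injective _))
  · exact IET.pow_regular_aux X n hreg hn _ rfl rfl rfl
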